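/- arXiv:2512.07047 — 2 statements merged into one kernel-verified Lean document; each statement's English description precedes it below -/
import Mathlib

section
/- (Equivariant Branching Lemma, one-dimensional fixed-space version.) Let Γ be a finite group acting on ℝⁿ through a representation ρ : Γ → GL(n, ℝ), and let F : ℝⁿ × ℝ → ℝⁿ be twice continuously differentiable and equivariant in the first variable: F(ρ(γ) x, μ) = ρ(γ) F(x, μ) for all γ ∈ Γ, x ∈ ℝⁿ, μ ∈ ℝ. Assume: (i) F(0, μ) = 0 for all μ; (ii) the derivative DₓF(0, 0) = 0; (iii) Σ is a subgroup of Γ whose fixed-point subspace Fix(Σ) = {x : ρ(σ)x = x for all σ ∈ Σ} is one-dimensional, spanned by a vector w ≠ 0; (iv) the crossing condition holds: the derivative with respect to μ at μ = 0 of the map μ ↦ DₓF(0, μ) w is nonzero. Then there exist δ > 0 and a continuously differentiable function μ : (−δ, δ) → ℝ with μ(0) = 0 such that F(s w, μ(s)) = 0 for all s ∈ (−δ, δ); i.e., a branch of equilibria with symmetry Σ bifurcates from the origin inside Fix(Σ). -/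
open intervalIntegral Metric

/-- The continuous linear map `(x, y) ↦ (t * x, y)`. -/
noncomputable def stmt13A (t : ℝ) : (ℝ × ℝ) →L[ℝ] (ℝ × ℝ) :=
  (t • (1 : ℝ →L[ℝ] ℝ)).prodMap (1 : ℝ →L[ℝ] ℝ)

lemma stmt13A_apply (t : ℝ) (p : ℝ × ℝ) : stmt13A t p = (t * p.1, p.2) := by
  simp [stmt13A, Prod.map, smul_eq_mul]

lemma stmt13A_cont : Continuous fun t => stmt13A t :=
  (ContinuousLinearMap.prodMapL ℝ ℝ ℝ ℝ ℝ).continuous.comp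
    ((continuous_id.smul continuous_const).prodMk continuous_const)

lemma stmt13A_norm (t : ℝ) (ht : |t| ≤ 1) : ‖stmt13A t‖ ≤ 1 := by
  refine ContinuousLinearMap.opNorm_le_bound _ zero_le_one fun p => ?_
  rw [stmt13A_apply, one_mul]
  rcases p with ⟨x, y⟩
  simp only [Prod.norm_def, Real.norm_eq_abs, abs_mul]
  exact max_le_max (by nlinarith [abs_nonneg x, abs_nonneg t]) le_rfl

lemma stmt13_hasFDerivAt_param (φ : ℝ × ℝ → ℝ) (hφ : ContDiff ℝ 1 φ) (p₀ : ℝ × ℝ) :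
    HasFDerivAt (fun p => ∫ t in (0:ℝ)..1, φ (stmt13A t p))
      (∫ t in (0:ℝ)..1, (fderiv ℝ φ (stmt13A t p₀)).comp (stmt13A t)) p₀ := by
  have hφd : Differentiable ℝ φ := hφ.differentiable one_ne_zero
  have hφ' : Continuous fun q => fderiv ℝ φ q := (contDiff_one_iff_fderiv.mp hφ).2
  obtain ⟨C, hC⟩ : ∃ C, ∀ q ∈ (fun z : ℝ × (ℝ × ℝ) => stmt13A z.1 z.2) ''
      (Set.Icc (0:ℝ) 1 ×ˢ closedBall p₀ 1), ‖fderiv ℝ φ q‖ ≤ C := by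
    apply ((isCompact_Icc.prod (isCompact_closedBall p₀ 1)).image
      ((stmt13A_cont.comp continuous_fst).clm_apply continuous_snd)).exists_bound_of_continuousOn
    exact hφ'.continuousOn
  refine (hasFDerivAt_integral_of_dominated_of_fderiv_le (E := ℝ) (μ := MeasureTheory.volume)
    (bound := fun _ => C) (F' := fun p t => (fderiv ℝ φ (stmt13A t p)).comp (stmt13A t))
    (ball_mem_nhds p₀ one_pos) ?_ ?_ ?_ ?_ ?_ ?_)
  · filter_upwards with x
    exact (hφ.continuous.comp (stmt13A_cont.clm_apply continuous_const)).aestronglyMeasurable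
  · exact (hφ.continuous.comp (stmt13A_cont.clm_apply continuous_const)).intervalIntegrable 0 1
  · exact ((hφ'.comp (stmt13A_cont.clm_apply continuous_const)).clm_comp
      stmt13A_cont).aestronglyMeasurable
  · filter_upwards with t ht x hx
    calc ‖(fderiv ℝ φ (stmt13A t x)).comp (stmt13A t)‖
        ≤ ‖fderiv ℝ φ (stmt13A t x)‖ * ‖stmt13A t‖ := ContinuousLinearMap.opNorm_comp_le _ _
      _ ≤ C * 1 := by
          refine mul_le_mul (hC _ ?_) (stmt13A_norm t ?_) (norm_nonneg _) ?_
          · exact ⟨(t, x), ⟨Set.mem_Icc.2 ⟨le_of_lt (Set.mem_Ioc.1 (by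
              simpa [Set.uIoc_of_le (zero_le_one' ℝ)] using ht)).1,
              (Set.mem_Ioc.1 (by simpa [Set.uIoc_of_le (zero_le_one' ℝ)] using ht)).2⟩,
              ball_subset_closedBall hx⟩, rfl⟩
          · have := Set.mem_Ioc.1 (by simpa [Set.uIoc_of_le (zero_le_one' ℝ)] using ht)
            rw [abs_le]; constructor <;> linarith [this.1, this.2]
          · exact le_trans (norm_nonneg _) (hC _ ⟨(t, p₀), ⟨Set.mem_Icc.2 ⟨le_of_lt (Set.mem_Ioc.1
              (by simpa [Set.uIoc_of_le (zero_le_one' ℝ)] using ht)).1,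
              (Set.mem_Ioc.1 (by simpa [Set.uIoc_of_le (zero_le_one' ℝ)] using ht)).2⟩,
              mem_closedBall_self zero_le_one⟩, rfl⟩)
      _ = C := mul_one C
  · exact intervalIntegrable_const
  · filter_upwards with t ht x hx
    exact ((hφd (stmt13A t x)).hasFDerivAt).comp x (stmt13A t).hasFDerivAt

lemma stmt13_contDiff_param (φ : ℝ × ℝ → ℝ) (hφ : ContDiff ℝ 1 φ) :
    ContDiff ℝ 1 (fun p => ∫ t in (0:ℝ)..1, φ (stmt13A t p)) := by
  have hφ' : Continuous fun q => fderiv ℝ φ q := (contDiff_one_iff_fderiv.mp hφ).2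
  refine contDiff_one_iff_fderiv.mpr
    ⟨fun p => (stmt13_hasFDerivAt_param φ hφ p).differentiableAt, ?_⟩
  rw [show (fderiv ℝ fun p => ∫ t in (0:ℝ)..1, φ (stmt13A t p))
      = fun p => ∫ t in (0:ℝ)..1, (fderiv ℝ φ (stmt13A t p)).comp (stmt13A t) from
      funext fun p => (stmt13_hasFDerivAt_param φ hφ p).fderiv]
  exact intervalIntegral.continuous_parametric_intervalIntegral_of_continuous'
    (f := fun p t => (fderiv ℝ φ (stmt13A t p)).comp (stmt13A t))
    (by exact ((hφ'.comp (stmt13A_cont.comp continuous_snd |>.clm_apply continuous_fst)).clm_comp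
      (stmt13A_cont.comp continuous_snd))) 0 1

/-- Equivariant Branching Lemma, one-dimensional fixed-space version:
for a `Γ`-equivariant `C²` bifurcation problem `F : ℝⁿ × ℝ → ℝⁿ` with `F(0,μ) = 0`,
`DₓF(0,0) = 0`, an axial subgroup `Sig` whose fixed-point subspace is the line
spanned by `w ≠ 0`, and a transversal crossing condition, there is a `C¹` branch
`s ↦ (s w, μ(s))` of equilibria with symmetry `Sig` bifurcating from the origin. -/
theorem stmt_13 {n : ℕ} {Γ : Type*} [Group Γ] [Finite Γ]
    (ρ : Γ →* ((Fin n → ℝ) ≃ₗ[ℝ] (Fin n → ℝ)))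
    (F : (Fin n → ℝ) → ℝ → (Fin n → ℝ))
    (hsmooth : ContDiff ℝ 2 (Function.uncurry F))
    (hequiv : ∀ (γ : Γ) (x : Fin n → ℝ) (μ : ℝ), F (ρ γ x) μ = ρ γ (F x μ))
    (htrivial : ∀ μ : ℝ, F 0 μ = 0)
    (L : ℝ → ((Fin n → ℝ) →L[ℝ] (Fin n → ℝ)))
    (hLderiv : ∀ μ : ℝ, HasFDerivAt (fun x => F x μ) (L μ) 0)
    (hL0 : L 0 = 0)
    (Sig : Subgroup Γ) (w : Fin n → ℝ) (hw : w ≠ 0)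
    (hfix : {x : Fin n → ℝ | ∀ σ ∈ Sig, ρ σ x = x}
      = (Submodule.span ℝ {w} : Submodule ℝ (Fin n → ℝ)))
    (c : Fin n → ℝ) (hcross : HasDerivAt (fun μ : ℝ => L μ w) c 0) (hc : c ≠ 0) :
    ∃ δ > (0 : ℝ), ∃ μbr : ℝ → ℝ,
      ContDiffOn ℝ 1 μbr (Set.Ioo (-δ) δ) ∧
      μbr 0 = 0 ∧
      ∀ s ∈ Set.Ioo (-δ) δ, F (s • w) (μbr s) = 0 := by
  classical
  obtain ⟨i, hwi⟩ : ∃ i, w i ≠ 0 := by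
    by_contra hcon; push_neg at hcon; exact hw (funext fun j => hcon j)
  -- `w` is fixed by `Sig`
  have hwmem : ∀ σ ∈ Sig, ρ σ w = w := by
    have : w ∈ {x : Fin n → ℝ | ∀ σ ∈ Sig, ρ σ x = x} := by
      rw [hfix]; exact Submodule.mem_span_singleton_self w
    exact this
  -- `F` preserves the fixed-point line
  have hFfix : ∀ s μ : ℝ, F (s • w) μ ∈ Submodule.span ℝ {w} := by
    intro s μ
    have hmem : F (s • w) μ ∈ {x : Fin n → ℝ | ∀ σ ∈ Sig, ρ σ x = x} := by
      intro σ hσ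
      have h1 : (ρ σ) (s • w) = s • w := by rw [map_smul, hwmem σ hσ]
      calc (ρ σ) (F (s • w) μ) = F ((ρ σ) (s • w)) μ := (hequiv σ _ μ).symm
        _ = F (s • w) μ := by rw [h1]
    rwa [hfix] at hmem
  -- the scalar reduced map `g`
  set g : ℝ × ℝ → ℝ := fun p => (F (p.1 • w) p.2) i * (w i)⁻¹ with hgdef
  have key : ∀ s μ : ℝ, F (s • w) μ = g (s, μ) • w := by
    intro s μ
    obtain ⟨a, ha⟩ := Submodule.mem_span_singleton.1 (hFfix s μ)
    rw [← ha]
    have hga : g (s, μ) = a := by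
      simp only [hgdef, ← ha, Pi.smul_apply, smul_eq_mul]
      field_simp
    rw [hga]
  have hg : ContDiff ℝ 2 g := by
    have h1 : ContDiff ℝ 2 fun p : ℝ × ℝ => F (p.1 • w) p.2 :=
      hsmooth.comp ((contDiff_fst.smul contDiff_const).prodMk contDiff_snd)
    exact (contDiff_pi.mp h1 i).mul contDiff_const
  have hgdiff : Differentiable ℝ g := hg.differentiable (by norm_num)
  -- partial derivative of `g` in the first variable
  set φ : ℝ × ℝ → ℝ := fun p => fderiv ℝ g p (1, 0) with hφdef
  have hφ : ContDiff ℝ 1 φ := (hg.fderiv_right (by norm_num)).clm_apply contDiff_const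
  have hpart : ∀ s₀ μ : ℝ, HasDerivAt (fun s => g (s, μ)) (φ (s₀, μ)) s₀ := by
    intro s₀ μ
    have h1 : HasFDerivAt g (fderiv ℝ g (s₀, μ)) (s₀, μ) := (hgdiff _).hasFDerivAt
    have h2 : HasDerivAt (fun s : ℝ => (s, μ)) ((1:ℝ), (0:ℝ)) s₀ :=
      (hasDerivAt_id s₀).prodMk (hasDerivAt_const s₀ μ)
    exact h1.comp_hasDerivAt s₀ h2
  -- the Hadamard quotient `h`
  set h : ℝ × ℝ → ℝ := fun p => ∫ t in (0:ℝ)..1, φ (stmt13A t p) with hhdef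
  have hh : ContDiff ℝ 1 h := stmt13_contDiff_param φ hφ
  have hg0 : ∀ μ : ℝ, g (0, μ) = 0 := by
    intro μ; simp [hgdef, zero_smul, htrivial μ]
  -- Fundamental theorem of calculus: `g (s, μ) = s * h (s, μ)`
  have hFTC : ∀ s μ : ℝ, g (s, μ) = s * h (s, μ) := by
    intro s μ
    have hint : ∀ t : ℝ, HasDerivAt (fun t => g (t * s, μ)) (s * φ (t * s, μ)) t := by
      intro t
      have h1 : HasFDerivAt g (fderiv ℝ g (t * s, μ)) (t * s, μ) := (hgdiff _).hasFDerivAt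
      have h2 : HasDerivAt (fun t : ℝ => (t * s, μ)) ((s:ℝ), (0:ℝ)) t := by
        simpa using ((hasDerivAt_id t).mul_const s).prodMk (hasDerivAt_const t μ)
      have h3 := h1.comp_hasDerivAt t h2
      have heq : fderiv ℝ g (t * s, μ) ((s:ℝ), (0:ℝ)) = s * φ (t * s, μ) := by
        rw [show ((s:ℝ), (0:ℝ)) = s • ((1:ℝ), (0:ℝ)) by simp, map_smul, smul_eq_mul]
      rw [heq] at h3
      exact h3
    have hcont : Continuous fun t : ℝ => s * φ (t * s, μ) :=
      continuous_const.mul (hφ.continuous.comp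
        ((continuous_id.mul continuous_const).prodMk continuous_const))
    have hint2 := intervalIntegral.integral_eq_sub_of_hasDerivAt
      (fun t _ => hint t) (hcont.intervalIntegrable 0 1)
    have : ∫ t in (0:ℝ)..1, s * φ (t * s, μ) = g (s, μ) := by
      rw [hint2]; norm_num [hg0 μ]
    rw [← this, intervalIntegral.integral_const_mul, hhdef]
    congr 1
  -- derivative of the one-parameter family along `w`
  have hsw : HasDerivAt (fun s : ℝ => s • w) w 0 := by
    simpa using (hasDerivAt_id (0:ℝ)).smul_const w
  have hFw : ∀ μ : ℝ, HasDerivAt (fun s : ℝ => F (s • w) μ) (L μ w) 0 := by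
    intro μ
    have h0 : ((0:ℝ) • w) = (0 : Fin n → ℝ) := zero_smul _ _
    have hL : HasFDerivAt (fun x => F x μ) (L μ) ((0:ℝ) • w) := h0 ▸ hLderiv μ
    exact hL.comp_hasDerivAt 0 hsw
  have hgs0 : ∀ μ : ℝ, φ (0, μ) = (L μ w) i * (w i)⁻¹ := by
    intro μ
    have h1 : HasDerivAt (fun s : ℝ => (F (s • w) μ) i) ((L μ w) i) 0 :=
      (ContinuousLinearMap.proj i : (Fin n → ℝ) →L[ℝ] ℝ).hasFDerivAt.comp_hasDerivAt 0 (hFw μ)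
    have h2 : HasDerivAt (fun s : ℝ => g (s, μ)) ((L μ w) i * (w i)⁻¹) 0 :=
      h1.mul_const _
    exact (hpart 0 μ).unique h2
  have hh0 : ∀ μ : ℝ, h (0, μ) = (L μ w) i * (w i)⁻¹ := by
    intro μ
    have : h (0, μ) = ∫ _t in (0:ℝ)..1, φ (0, μ) := by
      rw [hhdef]
      exact intervalIntegral.integral_congr fun t _ => by rw [stmt13A_apply]; norm_num
    rw [this, intervalIntegral.integral_const, hgs0 μ]
    norm_num
  -- `c` lies on the line spanned by `w`, so its `i`-th coordinate is nonzero
  have hLspan : ∀ μ : ℝ, L μ w ∈ Submodule.span ℝ {w} := by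
    intro μ
    have h1 : HasDerivAt (fun s : ℝ => g (s, μ) • w) (φ (0, μ) • w) 0 := (hpart 0 μ).smul_const w
    have h2 : (fun s : ℝ => F (s • w) μ) = fun s => g (s, μ) • w := funext fun s => key s μ
    have h3 := hFw μ
    rw [h2] at h3
    rw [h3.unique h1]
    exact Submodule.smul_mem _ _ (Submodule.mem_span_singleton_self w)
  have hcspan : c ∈ Submodule.span ℝ {w} := by
    have hclosed : IsClosed ((Submodule.span ℝ {w} : Submodule ℝ (Fin n → ℝ)) :
        Set (Fin n → ℝ)) := Submodule.closed_of_finiteDimensional _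
    have hslope := hasDerivAt_iff_tendsto_slope.mp hcross
    refine hclosed.mem_of_tendsto hslope (Filter.eventually_of_mem self_mem_nhdsWithin ?_)
    intro μ _
    have : slope (fun μ : ℝ => L μ w) 0 μ = (μ - 0)⁻¹ • (L μ w - L 0 w) := by
      simp [slope, vsub_eq_sub]
    rw [this]
    exact Submodule.smul_mem _ _ (Submodule.sub_mem _ (hLspan μ) (hLspan 0))
  have hci : c i ≠ 0 := by
    obtain ⟨b, hb⟩ := Submodule.mem_span_singleton.1 hcspan
    have hbne : b ≠ 0 := by rintro rfl; exact hc (by simp [← hb])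
    rw [← hb]; simpa [smul_eq_mul] using mul_ne_zero hbne hwi
  -- transversality for `h`
  have hderivμ : HasDerivAt (fun μ : ℝ => h (0, μ)) (c i * (w i)⁻¹) 0 := by
    have h1 : HasDerivAt (fun μ : ℝ => (L μ w) i) (c i) 0 :=
      (ContinuousLinearMap.proj i : (Fin n → ℝ) →L[ℝ] ℝ).hasFDerivAt.comp_hasDerivAt 0 hcross
    have h2 : HasDerivAt (fun μ : ℝ => (L μ w) i * (w i)⁻¹) (c i * (w i)⁻¹) 0 := h1.mul_const _
    have h3 : (fun μ : ℝ => h (0, μ)) = fun μ : ℝ => (L μ w) i * (w i)⁻¹ :=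
      funext fun μ => hh0 μ
    rw [h3]
    exact h2
  -- derivative data of `h` at the origin
  have hhD : HasFDerivAt h (fderiv ℝ h (0, 0)) ((0:ℝ), (0:ℝ)) :=
    ((hh.differentiable one_ne_zero) _).hasFDerivAt
  set D : (ℝ × ℝ) →L[ℝ] ℝ := fderiv ℝ h (0, 0) with hDdef
  set aa : ℝ := D (0, 1) with haadef
  set bb : ℝ := D (1, 0) with hbbdef
  have haa : aa = c i * (w i)⁻¹ := by
    have h2 : HasDerivAt (fun μ : ℝ => h (0, μ)) (D (0, 1)) 0 := by
      have h1 : HasDerivAt (fun μ : ℝ => ((0:ℝ), μ)) ((0:ℝ), (1:ℝ)) 0 :=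
        (hasDerivAt_const 0 (0:ℝ)).prodMk (hasDerivAt_id 0)
      exact hhD.comp_hasDerivAt 0 h1
    exact h2.unique hderivμ
  have haane : aa ≠ 0 := by
    rw [haa]; exact mul_ne_zero hci (inv_ne_zero hwi)
  have hDlin : ∀ x y : ℝ, D (x, y) = x * bb + y * aa := by
    intro x y
    have : ((x:ℝ), (y:ℝ)) = x • ((1:ℝ), (0:ℝ)) + y • ((0:ℝ), (1:ℝ)) := by simp
    rw [this, map_add, map_smul, map_smul, smul_eq_mul, smul_eq_mul, hbbdef, haadef]
  -- the invertible derivative of `ψ = (s, h)`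
  set f' : (ℝ × ℝ) →L[ℝ] (ℝ × ℝ) := (ContinuousLinearMap.fst ℝ ℝ ℝ).prod D with hf'def
  set g' : (ℝ × ℝ) →L[ℝ] (ℝ × ℝ) := (ContinuousLinearMap.fst ℝ ℝ ℝ).prod
    (aa⁻¹ • (ContinuousLinearMap.snd ℝ ℝ ℝ - bb • ContinuousLinearMap.fst ℝ ℝ ℝ)) with hg'def
  have hfg : Function.LeftInverse g' f' := by
    intro p
    have h1 : D p = p.1 * bb + p.2 * aa := by
      rw [← hDlin p.1 p.2]
    simp only [hf'def, hg'def, ContinuousLinearMap.prod_apply, ContinuousLinearMap.coe_fst',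
      ContinuousLinearMap.smul_apply, ContinuousLinearMap.sub_apply,
      ContinuousLinearMap.coe_snd', smul_eq_mul, h1]
    refine Prod.ext rfl ?_
    field_simp
    ring
  have hgf : Function.RightInverse g' f' := by
    intro p
    simp only [hf'def, hg'def, ContinuousLinearMap.prod_apply, ContinuousLinearMap.coe_fst',
      ContinuousLinearMap.smul_apply, ContinuousLinearMap.sub_apply,
      ContinuousLinearMap.coe_snd', smul_eq_mul]
    refine Prod.ext rfl ?_
    rw [hDlin]
    field_simp
    ring
  set e : (ℝ × ℝ) ≃L[ℝ] (ℝ × ℝ) := ContinuousLinearEquiv.equivOfInverse f' g' hfg hgf with hedef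
  have hecoe : (e : (ℝ × ℝ) →L[ℝ] (ℝ × ℝ)) = f' := rfl
  -- the map ψ and its local inverse
  set ψ : ℝ × ℝ → ℝ × ℝ := fun p => (p.1, h p) with hψdef
  have hψc : ContDiffAt ℝ 1 ψ ((0:ℝ), (0:ℝ)) := (contDiff_fst.prodMk hh).contDiffAt
  have hψf : HasFDerivAt ψ (e : (ℝ × ℝ) →L[ℝ] (ℝ × ℝ)) ((0:ℝ), (0:ℝ)) := by
    rw [hecoe, hf'def]
    exact (ContinuousLinearMap.fst ℝ ℝ ℝ).hasFDerivAt.prodMk hhD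
  have hψ00 : ψ ((0:ℝ), (0:ℝ)) = ((0:ℝ), (0:ℝ)) := by
    have hh00 : h (0, 0) = 0 := by rw [hh0 0, hL0]; simp
    rw [hψdef]
    exact Prod.ext rfl hh00
  set inv : ℝ × ℝ → ℝ × ℝ := hψc.localInverse hψf one_ne_zero with hinvdef
  have hstrict : HasStrictFDerivAt ψ (e : (ℝ × ℝ) →L[ℝ] (ℝ × ℝ)) ((0:ℝ), (0:ℝ)) :=
    hψc.hasStrictFDerivAt' hψf one_ne_zero
  have hinv_eq : inv = hstrict.localInverse ψ e ((0:ℝ), (0:ℝ)) := rfl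
  have hrinv : ∀ᶠ y in nhds ((0:ℝ), (0:ℝ)), ψ (inv y) = y := by
    have := hstrict.eventually_right_inverse
    rw [hψ00] at this
    exact this
  have hinv00 : inv ((0:ℝ), (0:ℝ)) = ((0:ℝ), (0:ℝ)) := by
    have := hstrict.localInverse_apply_image
    rw [hψ00] at this
    exact this
  have hinvC : ContDiffAt ℝ 1 inv ((0:ℝ), (0:ℝ)) := by
    have := hψc.to_localInverse hψf one_ne_zero
    rw [hψ00] at this
    exact this
  -- the branch
  set μbr : ℝ → ℝ := fun s => (inv (s, 0)).2 with hμbrdef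
  have hμbrC : ContDiffAt ℝ 1 μbr 0 := by
    have h1 : ContDiffAt ℝ 1 (fun s : ℝ => ((s, (0:ℝ)) : ℝ × ℝ)) 0 :=
      (contDiffAt_id.prodMk contDiffAt_const)
    have h2 : ContDiffAt ℝ 1 (fun s : ℝ => inv (s, 0)) 0 :=
      ContDiffAt.comp (f := fun s : ℝ => ((s, (0:ℝ)) : ℝ × ℝ)) 0 hinvC h1
    exact contDiffAt_snd.comp 0 h2
  obtain ⟨u, hu, hCDon⟩ := hμbrC.contDiffOn le_rfl (by simp)
  have hev : ∀ᶠ s in nhds (0:ℝ), ψ (inv (s, 0)) = (s, 0) := by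
    have hten : Filter.Tendsto (fun s : ℝ => ((s, (0:ℝ)) : ℝ × ℝ)) (nhds 0)
        (nhds ((0:ℝ), (0:ℝ))) := (continuous_id.prodMk continuous_const).tendsto' 0 _ rfl
    exact hten.eventually hrinv
  obtain ⟨v, hv, hvsub⟩ := Filter.eventually_iff_exists_mem.mp (hev.and (Filter.eventually_mem_set.mpr hu))
  obtain ⟨δ, hδ, hball⟩ := Metric.mem_nhds_iff.mp hv
  refine ⟨δ, hδ, μbr, ?_, ?_, ?_⟩
  · refine hCDon.mono ?_
    intro s hs
    have : s ∈ v := hball (by simpa [Real.ball_eq_Ioo] using hs)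
    exact (hvsub s this).2
  · exact congrArg Prod.snd hinv00
  · intro s hs
    have hsv : s ∈ v := hball (by simpa [Real.ball_eq_Ioo] using hs)
    have hψs : ψ (inv (s, 0)) = (s, 0) := (hvsub s hsv).1
    have h1 : (inv (s, 0)).1 = s := congrArg Prod.fst hψs
    have h2 : h (inv (s, 0)) = 0 := congrArg Prod.snd hψs
    have h3 : inv (s, 0) = (s, μbr s) := by
      rw [hμbrdef]
      exact Prod.ext h1 rfl
    rw [h3] at h2
    rw [key s (μbr s), hFTC s (μbr s), h2]
    simp
end

section
/- (SO(2)-equivariant Hopf bifurcation / rotating-wave branch.) Let R(φ) denote the 2×2 rotation matrix with columns (cos φ, sin φ) and (−sin φ, cos φ), and let J = R(π/2). Let F : ℝ² × ℝ → ℝ² be twice continuously differentiable and SO(2)-equivariant in the first variable: F(R(φ) x, μ) = R(φ) F(x, μ) for all φ ∈ ℝ, x ∈ ℝ², μ ∈ ℝ. Equivariance implies F(x, μ) = a(|x|², μ) x + b(|x|², μ) J x for scalar C¹ functions a, b; assume a(0, 0) = 0 (eigenvalue real parts vanish at μ = 0), b(0, 0) = ω ≠ 0 (nonzero rotation frequency),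 and ∂a/∂μ(0, 0) ≠ 0 (transversal eigenvalue crossing). Then there exist δ > 0 and continuously differentiable functions μ : (−δ, δ) → ℝ and Ω : (−δ, δ) → ℝ with μ(0) = 0 and Ω(0) = ω such that, for each s ∈ (0, δ), the curve x_s(t) = R(Ω(s) t) · (s, 0) is a nonconstant periodic solution of the differential equation x' = F(x, μ(s)) with period 2π/|Ω(s)|, and it is a rotating wave: x_s(t + θ/Ω(s)) = R(θ) x_s(t) for all θ, t ∈ ℝ. -/
open Real

/-- The 2×2 rotation matrix with columns `(cos φ, sin φ)` and `(−sin φ, cos φ)`. -/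
noncomputable def rotMat (φ : ℝ) : Matrix (Fin 2) (Fin 2) ℝ :=
  !![Real.cos φ, -Real.sin φ; Real.sin φ, Real.cos φ]

lemma rotMat_mulVec (φ s : ℝ) :
    (rotMat φ).mulVec ![s, 0] = ![s * Real.cos φ, s * Real.sin φ] := by
  funext i; fin_cases i <;>
    simp [rotMat, Matrix.mulVec, dotProduct, Fin.sum_univ_two] <;> ring

lemma rotMat_add_mulVec (α β : ℝ) (v : Fin 2 → ℝ) :
    (rotMat (α + β)).mulVec v = (rotMat α).mulVec ((rotMat β).mulVec v) := by
  funext i; fin_cases i <;>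
    simp [rotMat, Matrix.mulVec, dotProduct, Fin.sum_univ_two,
      Real.cos_add, Real.sin_add] <;> ring

lemma rotMat_two_pi (x : ℝ) : rotMat (x + 2 * π) = rotMat x := by
  simp [rotMat, Real.cos_add_two_pi, Real.sin_add_two_pi]

lemma rotMat_sub_two_pi (x : ℝ) : rotMat (x + -(2 * π)) = rotMat x := by
  have h : x + -(2 * π) = x - 2 * π := by ring
  simp [rotMat, h, Real.cos_sub_two_pi, Real.sin_sub_two_pi]

open Filter Topology in
lemma implicit_branch (a : ℝ → ℝ → ℝ) (ha : ContDiff ℝ 1 (Function.uncurry a))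
    (ha00 : a 0 0 = 0) (c : ℝ) (hcross : HasDerivAt (fun μ : ℝ => a 0 μ) c 0) (hc : c ≠ 0) :
    ∃ g : ℝ → ℝ, ContDiffAt ℝ 1 g 0 ∧ g 0 = 0 ∧ ∀ᶠ r in 𝓝 (0:ℝ), a r (g r) = 0 := by
  set D : (ℝ × ℝ) →L[ℝ] ℝ := fderiv ℝ (Function.uncurry a) (0, 0) with hDdef
  have hD : HasFDerivAt (Function.uncurry a) D (0, 0) :=
    (ha.differentiable one_ne_zero (0, 0)).hasFDerivAt
  set d : ℝ := D (1, 0) with hddef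
  have hpr : HasDerivAt (fun μ : ℝ => ((0 : ℝ), μ)) ((0 : ℝ), (1 : ℝ)) 0 :=
    (hasDerivAt_const 0 (0:ℝ)).prodMk (hasDerivAt_id 0)
  have hcomp : HasDerivAt (fun μ : ℝ => a 0 μ) (D (0, 1)) 0 := by
    have := hD.comp_hasDerivAt 0 hpr
    exact this
  have hDc : D (0, 1) = c := hcomp.unique hcross
  have hDp : ∀ p : ℝ × ℝ, D p = p.1 * d + p.2 * c := by
    intro p
    have hp : p = p.1 • ((1:ℝ), (0:ℝ)) + p.2 • ((0:ℝ), (1:ℝ)) := by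
      simp [Prod.ext_iff]
    rw [hp, map_add, map_smul, map_smul, hDc]
    simp [hddef, smul_eq_mul]
  set f : (ℝ × ℝ) →L[ℝ] (ℝ × ℝ) := (ContinuousLinearMap.fst ℝ ℝ ℝ).prod D with hfdef
  set ginv : (ℝ × ℝ) →L[ℝ] (ℝ × ℝ) :=
    (ContinuousLinearMap.fst ℝ ℝ ℝ).prod
      (c⁻¹ • ContinuousLinearMap.snd ℝ ℝ ℝ - (c⁻¹ * d) • ContinuousLinearMap.fst ℝ ℝ ℝ)
    with hgdef
  have h₁ : Function.LeftInverse ginv f := by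
    intro p
    simp only [hfdef, hgdef, ContinuousLinearMap.prod_apply, ContinuousLinearMap.coe_fst',
      ContinuousLinearMap.coe_snd', ContinuousLinearMap.sub_apply,
      ContinuousLinearMap.smul_apply, smul_eq_mul]
    rw [hDp]
    refine Prod.ext rfl ?_
    field_simp
    ring
  have h₂ : Function.RightInverse ginv f := by
    intro p
    simp only [hfdef, hgdef, ContinuousLinearMap.prod_apply, ContinuousLinearMap.coe_fst',
      ContinuousLinearMap.coe_snd', ContinuousLinearMap.sub_apply,
      ContinuousLinearMap.smul_apply, smul_eq_mul]
    rw [hDp]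
    refine Prod.ext rfl ?_
    field_simp
    ring
  set L : (ℝ × ℝ) ≃L[ℝ] (ℝ × ℝ) := ContinuousLinearEquiv.equivOfInverse f ginv h₁ h₂ with hLdef
  set A : ℝ × ℝ → ℝ × ℝ := fun p => (p.1, Function.uncurry a p) with hAdef
  have hAsm : ContDiffAt ℝ 1 A (0, 0) := (contDiffAt_fst).prodMk ha.contDiffAt
  have hA' : HasFDerivAt A (L : (ℝ × ℝ) →L[ℝ] (ℝ × ℝ)) (0, 0) := by
    have : (L : (ℝ × ℝ) →L[ℝ] (ℝ × ℝ)) = f := rfl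
    rw [this, hfdef]
    exact hasFDerivAt_fst.prodMk hD
  have hA0 : A (0, 0) = (0, 0) := by simp [hAdef, Function.uncurry, ha00]
  set ψ : ℝ × ℝ → ℝ × ℝ := hAsm.localInverse hA' one_ne_zero with hψdef
  have hψ0 : ψ (0, 0) = (0, 0) := by
    have := hAsm.localInverse_apply_image hA' one_ne_zero
    rwa [hA0] at this
  have hψsm : ContDiffAt ℝ 1 ψ (0, 0) := by
    have := hAsm.to_localInverse hA' one_ne_zero
    rwa [hA0] at this
  have hright : ∀ᶠ y in 𝓝 ((0:ℝ), (0:ℝ)), A (ψ y) = y := by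
    have := (hAsm.hasStrictFDerivAt' hA' one_ne_zero).eventually_right_inverse
    rwa [hA0] at this
  have hh : ContDiffAt ℝ 1 (fun r : ℝ => (r, (0:ℝ))) 0 := contDiffAt_id.prodMk contDiffAt_const
  have hψr : ContDiffAt ℝ 1 (fun r : ℝ => ψ (r, 0)) 0 := ContDiffAt.comp 0 hψsm hh
  refine ⟨fun r => (ψ (r, 0)).2, ?_, ?_, ?_⟩
  · exact ContDiffAt.comp 0 contDiffAt_snd hψr
  · show (ψ (0, 0)).2 = 0
    rw [hψ0]
  · have htend : Filter.Tendsto (fun r : ℝ => (r, (0:ℝ))) (𝓝 0) (𝓝 (0, 0)) :=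
      (continuous_id.prodMk continuous_const).continuousAt
    filter_upwards [htend.eventually hright] with r hr
    have h1 : (ψ (r, 0)).1 = r := congrArg Prod.fst hr
    have h2 : Function.uncurry a (ψ (r, 0)) = 0 := congrArg Prod.snd hr
    rw [Function.uncurry] at h2
    rwa [h1] at h2

open Filter Topology in
/-- SO(2)-equivariant Hopf bifurcation / rotating-wave branch:
if `F(x, μ) = a(|x|², μ) x + b(|x|², μ) J x` is SO(2)-equivariant with
`a(0,0) = 0`, `b(0,0) = ω ≠ 0`, and `∂a/∂μ(0,0) ≠ 0`, then there are `C¹` functions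
`μ(s)`, `Ω(s)` with `μ(0) = 0`, `Ω(0) = ω` such that for each `0 < s < δ` the curve
`x_s(t) = R(Ω(s) t)·(s,0)` is a nonconstant periodic solution of `x' = F(x, μ(s))`
with period `2π/|Ω(s)|`, and a rotating wave: `x_s(t + θ/Ω(s)) = R(θ) x_s(t)`. -/
theorem stmt_14
    (F : (Fin 2 → ℝ) → ℝ → (Fin 2 → ℝ))
    (hsmooth : ContDiff ℝ 2 (Function.uncurry F))
    (hequiv : ∀ (φ : ℝ) (x : Fin 2 → ℝ) (μ : ℝ),
        F ((rotMat φ).mulVec x) μ = (rotMat φ).mulVec (F x μ))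
    (a b : ℝ → ℝ → ℝ)
    (ha : ContDiff ℝ 1 (Function.uncurry a)) (hb : ContDiff ℝ 1 (Function.uncurry b))
    (hF : ∀ (x : Fin 2 → ℝ) (μ : ℝ),
        F x μ = a (x 0 ^ 2 + x 1 ^ 2) μ • x
          + b (x 0 ^ 2 + x 1 ^ 2) μ • (rotMat (π / 2)).mulVec x)
    (ω : ℝ) (ha00 : a 0 0 = 0) (hb00 : b 0 0 = ω) (hω : ω ≠ 0)
    (c : ℝ) (hcross : HasDerivAt (fun μ : ℝ => a 0 μ) c 0) (hc : c ≠ 0) :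
    ∃ δ > (0 : ℝ), ∃ μbr Ω : ℝ → ℝ,
      ContDiffOn ℝ 1 μbr (Set.Ioo (-δ) δ) ∧
      ContDiffOn ℝ 1 Ω (Set.Ioo (-δ) δ) ∧
      μbr 0 = 0 ∧ Ω 0 = ω ∧
      ∀ s ∈ Set.Ioo (0 : ℝ) δ,
        (∀ t : ℝ, HasDerivAt (fun t : ℝ => (rotMat (Ω s * t)).mulVec ![s, 0])
            (F ((rotMat (Ω s * t)).mulVec ![s, 0]) (μbr s)) t) ∧
        (∀ t : ℝ, (rotMat (Ω s * (t + 2 * π / |Ω s|))).mulVec ![s, 0]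
            = (rotMat (Ω s * t)).mulVec ![s, 0]) ∧
        (∃ t₁ t₂ : ℝ, (rotMat (Ω s * t₁)).mulVec ![s, 0]
            ≠ (rotMat (Ω s * t₂)).mulVec ![s, 0]) ∧
        (∀ θ t : ℝ, (rotMat (Ω s * (t + θ / Ω s))).mulVec ![s, 0]
            = (rotMat θ).mulVec ((rotMat (Ω s * t)).mulVec ![s, 0])) := by
  obtain ⟨g, hg, hg0, haz⟩ := implicit_branch a ha ha00 c hcross hc
  set μf : ℝ → ℝ := fun s => g (s ^ 2) with hμfdef
  set Ωf : ℝ → ℝ := fun s => b (s ^ 2) (μf s) with hΩfdef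
  have h02 : ((0:ℝ)) ^ 2 = (0:ℝ) := by norm_num
  have hsq : ContDiffAt ℝ 1 (fun s : ℝ => s ^ 2) 0 := (contDiff_id.pow 2).contDiffAt
  have hμ : ContDiffAt ℝ 1 μf 0 := ContDiffAt.comp 0 (h02.symm ▸ hg) hsq
  have hμ0 : μf 0 = 0 := by simp [hμfdef, hg0]
  have hΩ : ContDiffAt ℝ 1 Ωf 0 :=
    ContDiffAt.comp (g := Function.uncurry b) (f := fun s : ℝ => (s ^ 2, μf s)) (0:ℝ) hb.contDiffAt (hsq.prodMk hμ)
  have hΩ0 : Ωf 0 = ω := by simp [hΩfdef, hμ0, hb00]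
  have hne : ∀ᶠ s in 𝓝 (0:ℝ), Ωf s ≠ 0 :=
    hΩ.continuousAt.eventually_ne (by rw [hΩ0]; exact hω)
  have hazs : ∀ᶠ s in 𝓝 (0:ℝ), a (s ^ 2) (μf s) = 0 := by
    have h2 : Filter.Tendsto (fun s : ℝ => s ^ 2) (𝓝 0) (𝓝 0) := by
      have := (continuous_pow 2).tendsto (0:ℝ)
      simpa using this
    exact h2.eventually haz
  obtain ⟨u₁, hu₁, hμon⟩ := hμ.contDiffOn le_rfl (by simp)
  obtain ⟨u₂, hu₂, hΩon⟩ := hΩ.contDiffOn le_rfl (by simp)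
  have hmem : u₁ ∩ u₂ ∩ {s : ℝ | Ωf s ≠ 0 ∧ a (s ^ 2) (μf s) = 0} ∈ 𝓝 (0:ℝ) :=
    Filter.inter_mem (Filter.inter_mem hu₁ hu₂) (hne.and hazs)
  obtain ⟨δ, hδpos, hball⟩ := Metric.mem_nhds_iff.mp hmem
  have hIoo : Set.Ioo (-δ) δ ⊆ u₁ ∩ u₂ ∩ {s : ℝ | Ωf s ≠ 0 ∧ a (s ^ 2) (μf s) = 0} := by
    intro x hx
    apply hball
    simpa [Real.ball_eq_Ioo] using hx
  refine ⟨δ, hδpos, μf, Ωf, hμon.mono (fun x hx => (hIoo hx).1.1),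
    hΩon.mono (fun x hx => (hIoo hx).1.2), hμ0, hΩ0, ?_⟩
  intro s hs
  have hsIoo : s ∈ Set.Ioo (-δ) δ := ⟨by linarith [hs.1], hs.2⟩
  have hΩs : Ωf s ≠ 0 := (hIoo hsIoo).2.1
  have hazss : a (s ^ 2) (μf s) = 0 := (hIoo hsIoo).2.2
  have hspos : 0 < s := hs.1
  -- value of F along the orbit
  have hFx : ∀ φ : ℝ, F (![s * Real.cos φ, s * Real.sin φ]) (μf s)
      = ![s * (-Real.sin φ * Ωf s), s * (Real.cos φ * Ωf s)] := by
    intro φ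
    rw [hF]
    have hxy : (![s * Real.cos φ, s * Real.sin φ] : Fin 2 → ℝ) 0 ^ 2
        + (![s * Real.cos φ, s * Real.sin φ] : Fin 2 → ℝ) 1 ^ 2 = s ^ 2 := by
      simp only [Matrix.cons_val_zero, Matrix.cons_val_one, Matrix.head_cons]
      nlinarith [Real.sin_sq_add_cos_sq φ]
    rw [hxy, hazss, zero_smul, zero_add]
    have hΩval : b (s ^ 2) (μf s) = Ωf s := rfl
    rw [hΩval]
    funext i
    fin_cases i <;>
      simp [rotMat, Matrix.mulVec, dotProduct, Fin.sum_univ_two] <;> ring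
  refine ⟨?_, ?_, ?_, ?_⟩
  · -- differential equation
    intro t
    have hfun : (fun t : ℝ => (rotMat (Ωf s * t)).mulVec ![s, 0])
        = fun t : ℝ => ![s * Real.cos (Ωf s * t), s * Real.sin (Ωf s * t)] :=
      funext fun t => rotMat_mulVec _ _
    rw [hfun, rotMat_mulVec, hFx]
    have hlin : HasDerivAt (fun u : ℝ => Ωf s * u) (Ωf s) t := by
      simpa using (hasDerivAt_id t).const_mul (Ωf s)
    rw [hasDerivAt_pi]
    intro i
    fin_cases i
    · exact (hlin.cos).const_mul s
    · exact (hlin.sin).const_mul s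
  · -- periodicity
    intro t
    have hk : Ωf s * (t + 2 * π / |Ωf s|) = Ωf s * t + Ωf s * (2 * π / |Ωf s|) := by ring
    rcases hΩs.lt_or_gt with hneg | hpos
    · have habs : |Ωf s| = -Ωf s := abs_of_neg hneg
      have : Ωf s * (2 * π / |Ωf s|) = -(2 * π) := by
        rw [habs, div_neg, mul_neg, ← mul_div_assoc, mul_div_cancel_left₀ _ hΩs]
      rw [hk, this, rotMat_sub_two_pi]
    · have habs : |Ωf s| = Ωf s := abs_of_pos hpos
      have : Ωf s * (2 * π / |Ωf s|) = 2 * π := by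
        rw [habs, ← mul_div_assoc, mul_div_cancel_left₀ _ hΩs]
      rw [hk, this, rotMat_two_pi]
  · -- nonconstant
    refine ⟨0, π / Ωf s, ?_⟩
    intro h
    have hval := congrFun h 0
    rw [rotMat_mulVec, rotMat_mulVec] at hval
    have hπ : Ωf s * (π / Ωf s) = π := by
      rw [mul_comm]
      exact div_mul_cancel₀ π hΩs
    rw [mul_zero, hπ] at hval
    rw [Real.cos_zero, Real.cos_pi] at hval
    simp only [Matrix.cons_val_zero] at hval
    linarith
  · -- rotating wave
    intro θ t
    have : Ωf s * (t + θ / Ωf s) = θ + Ωf s * t := by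
      field_simp
      ring
    rw [this, rotMat_add_mulVec]
end
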